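/- arXiv:2309.17270 — 4 statements merged into one kernel-verified Lean document; each statement's English description precedes it below -/
import Mathlib

section
/- Consider the personalized PageRank equation x = αPx + (1-α)e_r, where P ∈ ℝ^{N×N} is column-stochastic with at most q ≥ 2 nonzero entries per column, α ∈ (0,1), and e_r is a standard basis vector. Let x↓ be the decreasing rearrangement of x. Then for all 1 ≤ i ≤ N, ∑_{j ≥ i} x↓_j ≤ α^{-1} i^{-log_q(1/α)}. -/
open Matrix BigOperators Finset

section aux
variable {N : ℕ} {P : Matrix (Fin N) (Fin N) ℝ}

lemma pow_entries_nonneg (hP0 : ∀ i j, 0 ≤ P i j) (s : ℕ) : ∀ i j, 0 ≤ (P ^ s) i j := by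
  induction s with
  | zero => intro i j; by_cases h : i = j <;> simp [Matrix.one_apply, h]
  | succ s ih =>
    intro i j
    rw [pow_succ, Matrix.mul_apply]
    exact Finset.sum_nonneg fun k _ => mul_nonneg (ih i k) (hP0 k j)

lemma pow_colsum (hP1 : ∀ j, ∑ i, P i j = 1) (s : ℕ) : ∀ j, ∑ i, (P ^ s) i j = 1 := by
  induction s with
  | zero => intro j; simp [Matrix.one_apply]
  | succ s ih =>
    intro j
    rw [pow_succ]
    simp only [Matrix.mul_apply]
    rw [Finset.sum_comm]
    simp only [← Finset.sum_mul, ih, one_mul]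
    exact hP1 j

lemma pow_entry_le_one (hP0 : ∀ i j, 0 ≤ P i j) (hP1 : ∀ j, ∑ i, P i j = 1) (s : ℕ)
    (i j : Fin N) : (P ^ s) i j ≤ 1 := by
  calc (P ^ s) i j ≤ ∑ k, (P ^ s) k j :=
        Finset.single_le_sum (fun k _ => pow_entries_nonneg hP0 s k j) (Finset.mem_univ i)
    _ = 1 := pow_colsum hP1 s j

lemma pow_support_card (hP0 : ∀ i j, 0 ≤ P i j) {q : ℕ}
    (hsparse : ∀ j, (Finset.univ.filter fun i => P i j ≠ 0).card ≤ q) (r : Fin N) (s : ℕ) :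
    (Finset.univ.filter fun k => (P ^ s) k r ≠ 0).card ≤ q ^ s := by
  induction s with
  | zero =>
    have : (Finset.univ.filter fun k => (1 : Matrix (Fin N) (Fin N) ℝ) k r ≠ 0) ⊆ {r} := by
      intro k hk
      simp only [Finset.mem_filter, Matrix.one_apply, ne_eq] at hk
      simp only [Finset.mem_singleton]
      by_contra h; simp [h] at hk
    simpa using (Finset.card_le_card this).trans (by simp)
  | succ s ih =>
    have hsub : (Finset.univ.filter fun k => (P ^ (s+1)) k r ≠ 0) ⊆
        (Finset.univ.filter fun m => (P ^ s) m r ≠ 0).biUnion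
          (fun m => Finset.univ.filter fun k => P k m ≠ 0) := by
      intro k hk
      simp only [Finset.mem_filter, ne_eq, Finset.mem_biUnion] at hk ⊢
      rcases hk with ⟨-, hk⟩
      rw [pow_succ', Matrix.mul_apply] at hk
      obtain ⟨m, -, hm⟩ := Finset.exists_ne_zero_of_sum_ne_zero hk
      exact ⟨m, ⟨Finset.mem_univ m, fun h => hm (by simp [h])⟩,
        Finset.mem_univ k, fun h => hm (by simp [h])⟩
    calc (Finset.univ.filter fun k => (P ^ (s+1)) k r ≠ 0).card
        ≤ ∑ m ∈ (Finset.univ.filter fun m => (P ^ s) m r ≠ 0),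
            (Finset.univ.filter fun k => P k m ≠ 0).card :=
          (Finset.card_le_card hsub).trans (Finset.card_biUnion_le)
      _ ≤ ∑ m ∈ (Finset.univ.filter fun m => (P ^ s) m r ≠ 0), q :=
          Finset.sum_le_sum fun m _ => hsparse m
      _ = (Finset.univ.filter fun m => (P ^ s) m r ≠ 0).card * q := by
          rw [Finset.sum_const, smul_eq_mul]
      _ ≤ q ^ s * q := Nat.mul_le_mul_right q ih
      _ = q ^ (s+1) := (pow_succ q s).symm

end aux

section main
variable {N : ℕ} {P : Matrix (Fin N) (Fin N) ℝ} {α : ℝ} {r : Fin N} {x : Fin N → ℝ}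

lemma mulVec_sum_eq (hP1 : ∀ j, ∑ i, P i j = 1) (v : Fin N → ℝ) :
    ∑ k, (P.mulVec v) k = ∑ k, v k := by
  simp only [Matrix.mulVec, dotProduct]
  rw [Finset.sum_comm]
  simp only [← Finset.sum_mul, hP1, one_mul]

lemma unroll (hx : x = α • P.mulVec x + (1 - α) • (Pi.single r 1 : Fin N → ℝ)) (T : ℕ) :
    ∀ k, x k = (1 - α) * (∑ s ∈ Finset.range T, α ^ s * (P ^ s) k r)
      + α ^ T * ((P ^ T).mulVec x) k := by
  induction T with
  | zero => intro k; simp [Matrix.one_mulVec]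
  | succ T ih =>
    intro k
    have hstep : (P ^ T).mulVec x
        = α • (P ^ (T+1)).mulVec x + (1 - α) • (fun m => (P ^ T) m r) := by
      conv_lhs => rw [hx]
      rw [Matrix.mulVec_add, Matrix.mulVec_smul, Matrix.mulVec_smul, Matrix.mulVec_mulVec,
        ← pow_succ, Matrix.mulVec_single]
      simp
      rfl
    rw [ih k, hstep]
    simp only [Pi.add_apply, Pi.smul_apply, smul_eq_mul, Finset.sum_range_succ]
    ring

lemma x_sum_one (hP1 : ∀ j, ∑ i, P i j = 1) (hα1 : α < 1)
    (hx : x = α • P.mulVec x + (1 - α) • (Pi.single r 1 : Fin N → ℝ)) :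
    ∑ k, x k = 1 := by
  have hs := congrArg (fun v : Fin N → ℝ => ∑ k, v k) hx
  simp only [Pi.add_apply, Pi.smul_apply, smul_eq_mul] at hs
  rw [Finset.sum_add_distrib, ← Finset.mul_sum, ← Finset.mul_sum, mulVec_sum_eq hP1] at hs
  have h2 : ∑ k, (Pi.single r 1 : Fin N → ℝ) k = 1 := by simp
  rw [h2, mul_one] at hs
  have h1α : (1 : ℝ) - α ≠ 0 := by linarith
  have : (1 - α) * (∑ k, x k) = (1 - α) * 1 := by linarith
  simpa using mul_left_cancel₀ h1α this

lemma x_nonneg (hP0 : ∀ i j, 0 ≤ P i j) (hP1 : ∀ j, ∑ i, P i j = 1)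
    (hα0 : 0 < α) (hα1 : α < 1)
    (hx : x = α • P.mulVec x + (1 - α) • (Pi.single r 1 : Fin N → ℝ)) :
    ∀ k, 0 ≤ x k := by
  intro k
  set C : ℝ := ∑ j, |x j| with hC
  have hmv : ∀ T : ℕ, -C ≤ ((P ^ T).mulVec x) k := by
    intro T
    simp only [Matrix.mulVec, dotProduct, hC]
    rw [← Finset.sum_neg_distrib]
    refine Finset.sum_le_sum fun j _ => ?_
    have habs : |(P ^ T) k j * x j| ≤ |x j| := by
      rw [abs_mul]
      calc |(P ^ T) k j| * |x j| = (P ^ T) k j * |x j| := by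
            rw [abs_of_nonneg (pow_entries_nonneg hP0 T k j)]
        _ ≤ 1 * |x j| := by
            exact mul_le_mul_of_nonneg_right (pow_entry_le_one hP0 hP1 T k j) (abs_nonneg _)
        _ = |x j| := one_mul _
    linarith [neg_abs_le ((P ^ T) k j * x j)]
  have hlow : ∀ T : ℕ, -(α ^ T * C) ≤ x k := by
    intro T
    have h1 := unroll hx T k
    have h2 : 0 ≤ (1 - α) * (∑ s ∈ Finset.range T, α ^ s * (P ^ s) k r) := by
      refine mul_nonneg (by linarith) (Finset.sum_nonneg fun s _ => ?_)
      exact mul_nonneg (pow_nonneg hα0.le s) (pow_entries_nonneg hP0 s k r)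
    have h3 : α ^ T * (-C) ≤ α ^ T * ((P ^ T).mulVec x) k :=
      mul_le_mul_of_nonneg_left (hmv T) (pow_nonneg hα0.le T)
    rw [h1]
    nlinarith
  have htend : Filter.Tendsto (fun T : ℕ => -(α ^ T * C)) Filter.atTop (nhds 0) := by
    have := (tendsto_pow_atTop_nhds_zero_of_lt_one hα0.le hα1).mul_const C
    simpa using this.neg
  exact le_of_tendsto' htend hlow

end main

theorem pagerank_tail_decay {N : ℕ} (P : Matrix (Fin N) (Fin N) ℝ) (q : ℕ) (α : ℝ)
    (hP0 : ∀ i j, 0 ≤ P i j) (hP1 : ∀ j, ∑ i, P i j = 1)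
    (hq : 2 ≤ q)
    (hsparse : ∀ j, (Finset.univ.filter fun i => P i j ≠ 0).card ≤ q)
    (hα0 : 0 < α) (hα1 : α < 1) (r : Fin N)
    (x : Fin N → ℝ)
    (hx : x = α • P.mulVec x + (1 - α) • (Pi.single r 1 : Fin N → ℝ))
    (σ : Equiv.Perm (Fin N))
    (hσ : ∀ j k : Fin N, j ≤ k → x (σ k) ≤ x (σ j)) :
    ∀ i : Fin N,
      ∑ j ∈ Finset.univ.filter (fun j : Fin N => i ≤ j), x (σ j)
        ≤ α⁻¹ * (((i : ℕ) : ℝ) + 1) ^ (-(Real.logb q α⁻¹)) := by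
  intro i
  have hxnn : ∀ k, 0 ≤ x k := x_nonneg hP0 hP1 hα0 hα1 hx
  have hsum1 : ∑ k, x k = 1 := x_sum_one hP1 hα1 hx
  set n : ℕ := (i : ℕ) with hn
  -- choose T
  have hq1 : 1 < q := hq
  set T : ℕ := Nat.log q (n * (q - 1) + 1) with hTdef
  have hT1 : q ^ T ≤ n * (q - 1) + 1 := Nat.pow_log_le_self q (Nat.succ_ne_zero _)
  have hT2 : n * (q - 1) + 1 < q ^ (T + 1) := Nat.lt_pow_succ_log_self hq1 _
  have hgeom : ∑ s ∈ Finset.range T, q ^ s ≤ n := by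
    rw [Nat.geomSum_eq hq]
    have h1 : q ^ T - 1 ≤ n * (q - 1) := by omega
    calc (q ^ T - 1) / (q - 1) ≤ n * (q - 1) / (q - 1) := Nat.div_le_div_right h1
      _ = n := Nat.mul_div_cancel n (by omega)
  have hpow : n + 1 ≤ q ^ (T + 1) := by
    have h1 : n ≤ n * (q - 1) := Nat.le_mul_of_pos_right n (by omega)
    omega
  -- support set A
  set A : Finset (Fin N) :=
    (Finset.range T).biUnion (fun s => Finset.univ.filter fun k => (P ^ s) k r ≠ 0) with hA
  have hAcard : A.card ≤ n :=
    (Finset.card_biUnion_le).trans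
      ((Finset.sum_le_sum fun s _ => pow_support_card hP0 hsparse r s).trans hgeom)
  have hoffA : ∀ k, k ∉ A → x k = α ^ T * ((P ^ T).mulVec x) k := by
    intro k hk
    rw [unroll hx T k]
    have : ∑ s ∈ Finset.range T, α ^ s * (P ^ s) k r = 0 := by
      refine Finset.sum_eq_zero fun s hs => ?_
      have : (P ^ s) k r = 0 := by
        by_contra h
        exact hk (Finset.mem_biUnion.2 ⟨s, hs, Finset.mem_filter.2 ⟨Finset.mem_univ k, h⟩⟩)
      rw [this, mul_zero]
    rw [this, mul_zero, zero_add]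
  -- Top set
  set Top : Finset (Fin N) := Finset.univ.filter (fun j : Fin N => j < i) with hTop
  have hTopIio : Top = Finset.Iio i := by ext j; simp [hTop, Finset.mem_Iio]
  have hTopcard : Top.card = n := by rw [hTopIio, Fin.card_Iio]
  -- the rearrangement bound : sum over A of x ≤ sum over Top of x∘σ
  have hA_top : ∑ k ∈ A, x k ≤ ∑ j ∈ Top, x (σ j) := by
    set B : Finset (Fin N) := A.image σ.symm with hB
    have hBcard : B.card ≤ n := (Finset.card_image_le).trans hAcard
    have hsumB : ∑ j ∈ B, x (σ j) = ∑ k ∈ A, x k := by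
      rw [hB, Finset.sum_image (fun a _ b _ h => σ.symm.injective h)]
      simp
    have hcardle : (B \ Top).card ≤ (Top \ B).card := by
      have h1 := Finset.card_inter_add_card_sdiff B Top
      have h2 := Finset.card_inter_add_card_sdiff Top B
      rw [Finset.inter_comm] at h2
      omega
    obtain ⟨D, hDsub, hDcard⟩ := Finset.exists_subset_card_eq hcardle
    have heqcard : Fintype.card D = Fintype.card (B \ Top : Finset (Fin N)) := by
      rw [Fintype.card_coe, Fintype.card_coe, hDcard]
    have hone : ∑ j ∈ B \ Top, x (σ j) ≤ ∑ d ∈ D, x (σ d) := by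
      classical
      let e : (D : Type) ≃ (B \ Top : Finset (Fin N)) := Fintype.equivOfCardEq heqcard
      calc ∑ j ∈ B \ Top, x (σ j) = ∑ j : (B \ Top : Finset (Fin N)), x (σ j) :=
            (Finset.sum_coe_sort (B \ Top) (fun k => x (σ k))).symm
        _ = ∑ d : D, x (σ (e d)) := (Equiv.sum_comp e fun j => x (σ j.1)).symm
        _ ≤ ∑ d : D, x (σ d) := by
            refine Finset.sum_le_sum fun d _ => ?_
            have hd : (d : Fin N) ∈ Top := (Finset.mem_sdiff.1 (hDsub d.2)).1
            have hed : ((e d : Fin N)) ∉ Top := (Finset.mem_sdiff.1 (e d).2).2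
            have hd' : (d : Fin N) < i := (Finset.mem_filter.1 hd).2
            have hed' : i ≤ (e d : Fin N) := by
              by_contra h
              exact hed (Finset.mem_filter.2 ⟨Finset.mem_univ _, not_le.1 h⟩)
            exact hσ _ _ (le_of_lt (lt_of_lt_of_le hd' hed'))
        _ = ∑ d ∈ D, x (σ d) := Finset.sum_coe_sort D (fun k => x (σ k))
    have htwo : ∑ d ∈ D, x (σ d) ≤ ∑ j ∈ Top \ B, x (σ j) :=
      Finset.sum_le_sum_of_subset_of_nonneg hDsub fun j _ _ => hxnn (σ j)
    calc ∑ k ∈ A, x k = ∑ j ∈ B, x (σ j) := hsumB.symm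
      _ = ∑ j ∈ B ∩ Top, x (σ j) + ∑ j ∈ B \ Top, x (σ j) :=
          (Finset.sum_inter_add_sum_sdiff B Top _).symm
      _ ≤ ∑ j ∈ Top ∩ B, x (σ j) + ∑ j ∈ Top \ B, x (σ j) := by
          rw [Finset.inter_comm]
          exact add_le_add le_rfl (hone.trans htwo)
      _ = ∑ j ∈ Top, x (σ j) := Finset.sum_inter_add_sum_sdiff Top B _
  -- tail bound
  have hperm : ∑ j, x (σ j) = 1 := by rw [Equiv.sum_comp σ x]; exact hsum1
  have hfilter_eq : Finset.univ.filter (fun j : Fin N => i ≤ j)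
      = Finset.univ.filter (fun j : Fin N => ¬ j < i) := by
    ext j; simp [not_lt]
  have hsplit := Finset.sum_filter_add_sum_filter_not Finset.univ
    (fun j : Fin N => j < i) (fun j => x (σ j))
  have htail_eq : ∑ j ∈ Finset.univ.filter (fun j : Fin N => i ≤ j), x (σ j)
      = 1 - ∑ j ∈ Top, x (σ j) := by
    rw [hfilter_eq]
    rw [hperm] at hsplit
    rw [hTop]
    linarith
  have hcompl : ∑ k ∈ Finset.univ \ A, x k = 1 - ∑ k ∈ A, x k := by
    have := Finset.sum_sdiff (Finset.subset_univ A) (f := x)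
    rw [hsum1] at this
    linarith
  have htail_le : ∑ j ∈ Finset.univ.filter (fun j : Fin N => i ≤ j), x (σ j)
      ≤ α ^ T := by
    rw [htail_eq]
    have h1 : 1 - ∑ j ∈ Top, x (σ j) ≤ 1 - ∑ k ∈ A, x k := by linarith
    have h2 : 1 - ∑ k ∈ A, x k = ∑ k ∈ Finset.univ \ A, x k := hcompl.symm
    have h3 : ∑ k ∈ Finset.univ \ A, x k = α ^ T * ∑ k ∈ Finset.univ \ A, ((P ^ T).mulVec x) k := by
      rw [Finset.mul_sum]
      exact Finset.sum_congr rfl fun k hk => hoffA k (Finset.mem_sdiff.1 hk).2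
    have h4 : ∑ k ∈ Finset.univ \ A, ((P ^ T).mulVec x) k ≤ ∑ k, ((P ^ T).mulVec x) k := by
      refine Finset.sum_le_sum_of_subset_of_nonneg (Finset.subset_univ _) fun k _ _ => ?_
      simp only [Matrix.mulVec, dotProduct]
      exact Finset.sum_nonneg fun j _ => mul_nonneg (pow_entries_nonneg hP0 T k j) (hxnn j)
    have h5 : ∑ k, ((P ^ T).mulVec x) k = 1 := by
      rw [mulVec_sum_eq (pow_colsum hP1 T) x]; exact hsum1
    calc 1 - ∑ j ∈ Top, x (σ j) ≤ ∑ k ∈ Finset.univ \ A, x k := by linarith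
      _ = α ^ T * ∑ k ∈ Finset.univ \ A, ((P ^ T).mulVec x) k := h3
      _ ≤ α ^ T * 1 := by
          rw [← h5]
          exact mul_le_mul_of_nonneg_left h4 (pow_nonneg hα0.le T)
      _ = α ^ T := mul_one _
  -- final numeric bound
  refine htail_le.trans ?_
  have hn1 : (0 : ℝ) < (n : ℝ) + 1 := by positivity
  have hq' : (1 : ℝ) < (q : ℝ) := by exact_mod_cast hq1
  have hlogb : Real.logb q ((n : ℝ) + 1) ≤ (T : ℝ) + 1 := by
    rw [Real.logb_le_iff_le_rpow hq' hn1]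
    calc ((n : ℝ) + 1) ≤ ((q : ℝ)) ^ ((T + 1 : ℕ) : ℝ) := by
          rw [Real.rpow_natCast]
          exact_mod_cast hpow
      _ = (q : ℝ) ^ ((T : ℝ) + 1) := by push_cast; ring_nf
  have hrw : (((n : ℝ)) + 1) ^ (-(Real.logb q α⁻¹)) = α ^ (Real.logb q ((n : ℝ) + 1)) := by
    rw [Real.rpow_def_of_pos hn1, Real.rpow_def_of_pos hα0]
    congr 1
    rw [Real.logb, Real.logb, Real.log_inv]
    ring
  calc α ^ T = α ^ ((T : ℕ) : ℝ) := (Real.rpow_natCast α T).symm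
    _ ≤ α ^ (Real.logb q ((n : ℝ) + 1) - 1) :=
        Real.rpow_le_rpow_of_exponent_ge hα0 hα1.le (by push_cast; linarith)
    _ = α⁻¹ * α ^ (Real.logb q ((n : ℝ) + 1)) := by
        rw [Real.rpow_sub hα0, Real.rpow_one]; ring
    _ = α⁻¹ * (((n : ℝ)) + 1) ^ (-(Real.logb q α⁻¹)) := by rw [hrw]
end

section
/- Let v ∈ ℂ^N and let Z be any random vector with ‖Z‖₀ ≤ m almost surely and EZ = v. Write N_i = 1{Z_i ≠ 0}. Then E‖Z - v‖² ≥ ∑_{i=1}^N |v_i|² (1/E[N_i] - 1), with equality when Z_i = v_i N_i / E[N_i]. -/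
open MeasureTheory BigOperators
open scoped Classical

private lemma ind_integrable {Ω : Type*} [MeasurableSpace Ω] {μ : Measure Ω}
    [IsFiniteMeasure μ] {f : Ω → ℂ} (hm : AEMeasurable f μ) :
    Integrable (fun ω => if f ω ≠ 0 then (1 : ℝ) else 0) μ := by
  have hmeas : AEMeasurable (fun ω => if f ω ≠ 0 then (1 : ℝ) else 0) μ := by
    rcases hm with ⟨g, hg, hfg⟩
    refine ⟨fun ω => if g ω ≠ 0 then (1 : ℝ) else 0, ?_, ?_⟩
    · exact Measurable.ite ((hg (measurableSet_singleton 0)).compl) measurable_const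
        measurable_const
    · filter_upwards [hfg] with ω hω
      simp [hω]
  refine Integrable.mono' (integrable_const 1) hmeas.aestronglyMeasurable ?_
  filter_upwards with ω
  by_cases h : f ω = 0 <;> simp [h]

private lemma normSq_sub_const_integrable {Ω : Type*} [MeasurableSpace Ω] {μ : Measure Ω}
    [IsFiniteMeasure μ] {f : Ω → ℂ} (h1 : Integrable f μ)
    (h2 : Integrable (fun ω => Complex.normSq (f ω)) μ) (c : ℂ) :
    Integrable (fun ω => Complex.normSq (f ω - c)) μ := by
  have e : (fun ω => Complex.normSq (f ω - c))
      = fun ω => Complex.normSq (f ω) + Complex.normSq c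
          - 2 * ((f ω * (starRingEnd ℂ) c).re) := by
    funext ω; rw [Complex.normSq_sub]
  rw [e]
  exact (h2.add (integrable_const _)).sub (((h1.mul_const _).re).const_mul 2)

private lemma int_normSq_sub_const {Ω : Type*} [MeasurableSpace Ω] {μ : Measure Ω}
    [IsProbabilityMeasure μ] {f : Ω → ℂ} {v : ℂ} (h1 : Integrable f μ)
    (h2 : Integrable (fun ω => Complex.normSq (f ω)) μ)
    (hv : ∫ ω, f ω ∂μ = v) :
    ∫ ω, Complex.normSq (f ω - v) ∂μ
      = (∫ ω, Complex.normSq (f ω) ∂μ) - Complex.normSq v := by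
  have e : ∀ ω, Complex.normSq (f ω - v)
      = Complex.normSq (f ω) + Complex.normSq v
          - 2 * ((f ω * (starRingEnd ℂ) v).re) := fun ω => Complex.normSq_sub _ _
  simp_rw [e]
  have hA : Integrable (fun ω => Complex.normSq (f ω) + Complex.normSq v) μ := by
    exact h2.add (integrable_const _)
  have hB : Integrable (fun ω => 2 * ((f ω * (starRingEnd ℂ) v).re)) μ := by
    exact ((h1.mul_const _).re).const_mul 2
  have hRe : ∫ ω, (f ω * (starRingEnd ℂ) v).re ∂μ = (∫ ω, f ω * (starRingEnd ℂ) v ∂μ).re := by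
    exact integral_re (h1.mul_const _)
  rw [integral_sub hA hB, integral_add h2 (integrable_const _), integral_const,
    integral_const_mul, hRe, integral_mul_const, hv, Complex.mul_conj]
  simp
  ring

private lemma int_normSq_sub_ind {Ω : Type*} [MeasurableSpace Ω] {μ : Measure Ω}
    [IsProbabilityMeasure μ] {f : Ω → ℂ} {v : ℂ} (hm : AEMeasurable f μ)
    (h1 : Integrable f μ)
    (h2 : Integrable (fun ω => Complex.normSq (f ω)) μ)
    (hv : ∫ ω, f ω ∂μ = v) (c : ℂ) :
    ∫ ω, Complex.normSq (f ω - c * (if f ω ≠ 0 then (1 : ℂ) else 0)) ∂μ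
      = (∫ ω, Complex.normSq (f ω) ∂μ)
        + Complex.normSq c * (∫ ω, (if f ω ≠ 0 then (1 : ℝ) else 0) ∂μ)
        - 2 * (((starRingEnd ℂ) c) * v).re := by
  have e : ∀ ω, Complex.normSq (f ω - c * (if f ω ≠ 0 then (1 : ℂ) else 0))
      = Complex.normSq (f ω) + Complex.normSq c * (if f ω ≠ 0 then (1 : ℝ) else 0)
          - 2 * (((starRingEnd ℂ) c) * f ω).re := by
    intro ω
    by_cases h : f ω = 0
    · simp [h]
    · simp only [h, ne_eq, not_false_eq_true, if_true, mul_one]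
      rw [Complex.normSq_sub]
      ring_nf
  simp_rw [e]
  have hA : Integrable (fun ω => Complex.normSq (f ω)
      + Complex.normSq c * (if f ω ≠ 0 then (1 : ℝ) else 0)) μ := by
    exact h2.add ((ind_integrable hm).const_mul _)
  have hB : Integrable (fun ω => 2 * (((starRingEnd ℂ) c) * f ω).re) μ := by
    exact ((h1.const_mul _).re).const_mul 2
  have hRe : ∫ ω, (((starRingEnd ℂ) c) * f ω).re ∂μ
      = (∫ ω, ((starRingEnd ℂ) c) * f ω ∂μ).re := by
    exact integral_re (h1.const_mul _)
  rw [integral_sub hA hB, integral_add h2 ((ind_integrable hm).const_mul _),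
    integral_const_mul, integral_const_mul, hRe, integral_const_mul, hv]

private lemma ind_nonneg_int {Ω : Type*} [MeasurableSpace Ω] {μ : Measure Ω}
    [IsProbabilityMeasure μ] (f : Ω → ℂ) :
    0 ≤ ∫ ω, (if f ω ≠ 0 then (1 : ℝ) else 0) ∂μ := by
  apply integral_nonneg
  intro ω
  by_cases h : f ω = 0 <;> simp [h]

private lemma key_ineq {Ω : Type*} [MeasurableSpace Ω] {μ : Measure Ω}
    [IsProbabilityMeasure μ] {f : Ω → ℂ} {v : ℂ} (hm : AEMeasurable f μ)
    (h1 : Integrable f μ)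
    (h2 : Integrable (fun ω => Complex.normSq (f ω)) μ)
    (hv : ∫ ω, f ω ∂μ = v) :
    Complex.normSq v * (1 / (∫ ω, (if f ω ≠ 0 then (1 : ℝ) else 0) ∂μ) - 1)
      ≤ ∫ ω, Complex.normSq (f ω - v) ∂μ := by
  set p := ∫ ω, (if f ω ≠ 0 then (1 : ℝ) else 0) ∂μ with hp
  rw [int_normSq_sub_const h1 h2 hv]
  by_cases hp0 : p = 0
  · -- indicator a.e. zero, so f =ᵐ 0, v = 0
    have hae : (fun ω => if f ω ≠ 0 then (1 : ℝ) else 0) =ᶠ[ae μ] 0 := by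
      rw [← integral_eq_zero_iff_of_nonneg_ae _ (ind_integrable hm)]
      · exact hp0.symm ▸ hp.symm
      · filter_upwards with ω
        by_cases h : f ω = 0 <;> simp [h]
    have hf0 : f =ᶠ[ae μ] 0 := by
      filter_upwards [hae] with ω hω
      by_cases h : f ω = 0
      · exact h
      · simp [h] at hω
    have hv0 : v = 0 := by
      rw [← hv, integral_congr_ae hf0]; simp
    rw [hv0]
    simp
    exact integral_nonneg fun ω => Complex.normSq_nonneg _
  · have hppos : 0 < p := lt_of_le_of_ne (ind_nonneg_int f) (Ne.symm hp0)
    have hkey : 0 ≤ ∫ ω, Complex.normSq (f ω - (v / (p : ℂ)) * (if f ω ≠ 0 then (1 : ℂ) else 0)) ∂μ :=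
      integral_nonneg fun ω => Complex.normSq_nonneg _
    rw [int_normSq_sub_ind hm h1 h2 hv] at hkey
    have e1 : Complex.normSq (v / (p : ℂ)) = Complex.normSq v / p ^ 2 := by
      rw [Complex.normSq_div, Complex.normSq_ofReal]; ring_nf
    have e2 : (((starRingEnd ℂ) (v / (p : ℂ))) * v).re = Complex.normSq v / p := by
      rw [map_div₀, Complex.conj_ofReal, div_mul_eq_mul_div, mul_comm, Complex.mul_conj]
      rw [show ((Complex.normSq v : ℂ) / (p : ℂ)) = ((Complex.normSq v / p : ℝ) : ℂ) by push_cast; ring]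
      exact Complex.ofReal_re _
    rw [e1, e2] at hkey
    have h3 : Complex.normSq v / p ^ 2 * p = Complex.normSq v / p := by
      field_simp
    rw [h3] at hkey
    have h4 : Complex.normSq v * (1 / p) = Complex.normSq v / p := by ring
    nlinarith [hkey]

private lemma key_eq {Ω : Type*} [MeasurableSpace Ω] {μ : Measure Ω}
    [IsProbabilityMeasure μ] {f : Ω → ℂ} {v : ℂ} (hm : AEMeasurable f μ)
    (h1 : Integrable f μ)
    (h2 : Integrable (fun ω => Complex.normSq (f ω)) μ)
    (hv : ∫ ω, f ω ∂μ = v)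
    (heq : ∀ᵐ ω ∂μ, f ω = v * (if f ω ≠ 0 then (1 : ℂ) else 0) /
        ((∫ ω', (if f ω' ≠ 0 then (1 : ℝ) else 0) ∂μ : ℝ) : ℂ)) :
    Complex.normSq v * (1 / (∫ ω, (if f ω ≠ 0 then (1 : ℝ) else 0) ∂μ) - 1)
      = ∫ ω, Complex.normSq (f ω - v) ∂μ := by
  set p := ∫ ω, (if f ω ≠ 0 then (1 : ℝ) else 0) ∂μ with hp
  rw [int_normSq_sub_const h1 h2 hv]
  by_cases hp0 : p = 0
  · have hf0 : f =ᶠ[ae μ] 0 := by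
      filter_upwards [heq] with ω hω
      rw [hω, hp0]
      simp
    have hv0 : v = 0 := by
      rw [← hv, integral_congr_ae hf0]; simp
    have hI0 : ∫ ω, Complex.normSq (f ω) ∂μ = 0 := by
      rw [integral_congr_ae (g := fun _ => (0:ℝ)) ?_]
      · simp
      · filter_upwards [hf0] with ω hω
        simp [hω]
    rw [hv0, hI0]
    simp
  · have hI : ∫ ω, Complex.normSq (f ω) ∂μ = Complex.normSq v / p := by
      have hc : (fun ω => Complex.normSq (f ω)) =ᶠ[ae μ]
          (fun ω => Complex.normSq v / p ^ 2 * (if f ω ≠ 0 then (1 : ℝ) else 0)) := by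
        filter_upwards [heq] with ω hω
        by_cases h : f ω = 0
        · simp [h]
        · simp only [h, ne_eq, not_false_eq_true, if_true, mul_one] at hω ⊢
          rw [hω, Complex.normSq_div, Complex.normSq_ofReal]
          ring
      rw [integral_congr_ae hc, integral_const_mul, ← hp]
      field_simp
    rw [hI]
    field_simp

theorem sparse_unbiased_variance_lower_bound {N m : ℕ} {Ω : Type*} [MeasurableSpace Ω]
    (μ : Measure Ω) [IsProbabilityMeasure μ]
    (v : Fin N → ℂ) (Z : Ω → Fin N → ℂ)
    (hmeas : ∀ i, AEMeasurable (fun ω => Z ω i) μ)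
    (hint1 : ∀ i, Integrable (fun ω => Z ω i) μ)
    (hint2 : Integrable (fun ω => ∑ i, ‖Z ω i‖ ^ 2) μ)
    (hsparse : ∀ᵐ ω ∂μ, (Finset.univ.filter fun i => Z ω i ≠ 0).card ≤ m)
    (hunbiased : ∀ i, ∫ ω, Z ω i ∂μ = v i) :
    (∑ i, ‖v i‖ ^ 2 *
        (1 / (∫ ω, (if Z ω i ≠ 0 then (1 : ℝ) else 0) ∂μ) - 1))
      ≤ ∫ ω, ∑ i, ‖Z ω i - v i‖ ^ 2 ∂μ ∧
    ((∀ᵐ ω ∂μ, ∀ i, Z ω i = v i * (if Z ω i ≠ 0 then (1 : ℂ) else 0) /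
          ((∫ ω', (if Z ω' i ≠ 0 then (1 : ℝ) else 0) ∂μ : ℝ) : ℂ)) →
      (∑ i, ‖v i‖ ^ 2 *
          (1 / (∫ ω, (if Z ω i ≠ 0 then (1 : ℝ) else 0) ∂μ) - 1))
        = ∫ ω, ∑ i, ‖Z ω i - v i‖ ^ 2 ∂μ) := by
  have h2 : ∀ i, Integrable (fun ω => Complex.normSq (Z ω i)) μ := by
    intro i
    refine Integrable.mono' hint2
      ((Complex.continuous_normSq.measurable.comp_aemeasurable (hmeas i)).aestronglyMeasurable) ?_
    filter_upwards with ω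
    rw [Real.norm_eq_abs, abs_of_nonneg (Complex.normSq_nonneg _), ← Complex.sq_norm]
    exact Finset.single_le_sum (f := fun j => ‖Z ω j‖ ^ 2)
      (fun j _ => sq_nonneg _) (Finset.mem_univ i)
  have hIsum : ∫ ω, ∑ i, Complex.normSq (Z ω i - v i) ∂μ
      = ∑ i, ∫ ω, Complex.normSq (Z ω i - v i) ∂μ :=
    integral_finset_sum Finset.univ
      (fun i _ => normSq_sub_const_integrable (hint1 i) (h2 i) (v i))
  simp_rw [Complex.sq_norm]
  rw [hIsum]
  constructor
  · exact Finset.sum_le_sum fun i _ => key_ineq (hmeas i) (hint1 i) (h2 i) (hunbiased i)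
  · intro h
    refine Finset.sum_congr rfl fun i _ => ?_
    exact key_eq (hmeas i) (hint1 i) (h2 i) (hunbiased i)
      (by filter_upwards [h] with ω hω using hω i)
end

section
/- Fix v ∈ ℂ^N with entries sorted so |v_1| ≥ |v_2| ≥ ⋯ ≥ |v_N|, and a positive integer m ≤ N. Define f(q) = (1/(m-q))(∑_{i=q+1}^N |v_i|)² - ∑_{i=q+1}^N |v_i|² for integers 0 ≤ q < m. Then f(q+1) - f(q) = ((m-q)/(m-q-1)) · ((1/(m-q)) ∑_{i=q+1}^N |v_i| - |v_{q+1}|)² ≥ 0; in particular, f is nondecreasing in q. -/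
open BigOperators

/-- Tail sum of absolute values: entries with (0-based) index `≥ q`. -/
noncomputable def tailAbs {N : ℕ} (v : Fin N → ℂ) (q : ℕ) : ℝ :=
  ∑ i ∈ Finset.univ.filter (fun i : Fin N => q ≤ (i : ℕ)), ‖v i‖

/-- Tail sum of squared absolute values. -/
noncomputable def tailSq {N : ℕ} (v : Fin N → ℂ) (q : ℕ) : ℝ :=
  ∑ i ∈ Finset.univ.filter (fun i : Fin N => q ≤ (i : ℕ)), ‖v i‖ ^ 2

/-- The optimal-variance objective when the `q` largest entries are preserved exactly. -/
noncomputable def fObj {N : ℕ} (v : Fin N → ℂ) (m q : ℕ) : ℝ :=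
  1 / ((m : ℝ) - q) * (tailAbs v q) ^ 2 - tailSq v q

lemma tail_step {N : ℕ} (g : Fin N → ℝ) (q : ℕ) (hq : q < N) :
    ∑ i ∈ Finset.univ.filter (fun i : Fin N => q ≤ (i : ℕ)), g i
      = g ⟨q, hq⟩ + ∑ i ∈ Finset.univ.filter (fun i : Fin N => q + 1 ≤ (i : ℕ)), g i := by
  have hset : Finset.univ.filter (fun i : Fin N => q ≤ (i : ℕ))
      = insert ⟨q, hq⟩ (Finset.univ.filter (fun i : Fin N => q + 1 ≤ (i : ℕ))) := by
    ext i
    simp only [Finset.mem_filter, Finset.mem_univ, true_and, Finset.mem_insert, Fin.ext_iff]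
    omega
  rw [hset, Finset.sum_insert (by simp)]

theorem fObj_increment_nonneg {N m : ℕ} (v : Fin N → ℂ)
    (hsort : ∀ j k : Fin N, j ≤ k → ‖v k‖ ≤ ‖v j‖)
    (hm0 : 0 < m) (hmN : m ≤ N) :
    (∀ q : ℕ, ∀ hq : q + 1 < m,
      fObj v m (q + 1) - fObj v m q
          = ((m : ℝ) - q) / ((m : ℝ) - q - 1) *
              (1 / ((m : ℝ) - q) * tailAbs v q
                - ‖v ⟨q, by omega⟩‖) ^ 2 ∧
      0 ≤ fObj v m (q + 1) - fObj v m q) ∧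
    (∀ q q' : ℕ, q ≤ q' → q' < m → fObj v m q ≤ fObj v m q') := by
  have key : ∀ q : ℕ, ∀ hq : q + 1 < m,
      fObj v m (q + 1) - fObj v m q
          = ((m : ℝ) - q) / ((m : ℝ) - q - 1) *
              (1 / ((m : ℝ) - q) * tailAbs v q
                - ‖v ⟨q, by omega⟩‖) ^ 2 ∧
      0 ≤ fObj v m (q + 1) - fObj v m q := by
    intro q hq
    have hqN : q < N := by omega
    have hA : tailAbs v q = ‖v ⟨q, hqN⟩‖ + tailAbs v (q + 1) :=
      tail_step (fun i => ‖v i‖) q hqN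
    have hS : tailSq v q = ‖v ⟨q, hqN⟩‖ ^ 2 + tailSq v (q + 1) :=
      tail_step (fun i => ‖v i‖ ^ 2) q hqN
    set t : ℝ := (m : ℝ) - q with ht
    have ht2 : (2 : ℝ) ≤ t := by
      have : (q : ℝ) + 2 ≤ (m : ℝ) := by exact_mod_cast by omega
      linarith
    have ht0 : t ≠ 0 := by linarith
    have ht1 : t - 1 ≠ 0 := by linarith
    have hcast : ((q + 1 : ℕ) : ℝ) = (q : ℝ) + 1 := by push_cast; ring
    have hident : fObj v m (q + 1) - fObj v m q
        = t / (t - 1) * (1 / t * tailAbs v q - ‖v ⟨q, hqN⟩‖) ^ 2 := by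
      unfold fObj
      rw [hA, hS, hcast]
      have hS' : tailAbs v (q + 1) = tailAbs v q - ‖v ⟨q, hqN⟩‖ := by
        rw [hA]; ring
      rw [hS']
      have : (m : ℝ) - ((q : ℝ) + 1) = t - 1 := by rw [ht]; ring
      rw [this]
      rw [← ht]
      field_simp
      ring
    refine ⟨hident, ?_⟩
    rw [hident]
    exact mul_nonneg (div_nonneg (by linarith) (by linarith)) (sq_nonneg _)
  refine ⟨key, ?_⟩
  intro q q' hle hlt
  induction q' with
  | zero => interval_cases q; simp
  | succ k ih =>
    rcases Nat.lt_or_ge q (k + 1) with h | h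
    · have h1 : fObj v m q ≤ fObj v m k := ih (by omega) (by omega)
      have h2 := (key k hlt).2
      linarith
    · have : q = k + 1 := by omega
      simp [this]
end

section
/- Let v ∈ ℂ^N and let Φ(v) be an unbiased m-sparse random sparsification of v whose entry selections are negatively correlated (P{i,j both selected} ≤ p_i p_j) and whose optimal-probability L² error satisfies E‖Φ(v) - v‖² ≤ min_{i≤m} (1/(m-i))(∑_{j>i}|v↓_j|)². Then for every f ∈ ℂ^N with ‖f‖_∞ ≤ 1, E|f*(Φ(v) - v)|² ≤ 2·min_{i≤m}(1/(m-i))(∑_{j>i}|v↓_j|)², i.e., the triple-norm squared error is at most twice the optimal L² error. -/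
open MeasureTheory BigOperators

section Aux

variable {Ω : Type*} [MeasurableSpace Ω] (μ : Measure Ω) [IsProbabilityMeasure μ]

lemma myInt {h : Ω → ℝ} (hm : Measurable h) (C : ℝ) (hb : ∀ ω, |h ω| ≤ C) :
    Integrable h μ := by
  refine ⟨hm.aestronglyMeasurable, HasFiniteIntegral.of_bounded (C := C) (ae_of_all _ ?_)⟩
  simpa [Real.norm_eq_abs] using hb

lemma sumSqNonneg {N : ℕ} (g : Fin N → Ω → ℝ) (hm : ∀ j, Measurable (g j))
    (C : Fin N → ℝ) (hb : ∀ j ω, |g j ω| ≤ C j)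
    (hneg : ∀ j k, j ≠ k → ∫ ω, g j ω * g k ω ∂μ ≤ 0)
    (a : Fin N → ℝ) (ha : ∀ j, 0 ≤ a j) :
    ∫ ω, (∑ j, a j * g j ω) ^ 2 ∂μ ≤ ∑ j, a j ^ 2 * ∫ ω, g j ω ^ 2 ∂μ := by
  have hint : ∀ j k : Fin N, Integrable (fun ω => (a j * g j ω) * (a k * g k ω)) μ := by
    intro j k
    refine myInt μ (((hm j).const_mul _).mul ((hm k).const_mul _)) (|a j| * C j * (|a k| * C k)) ?_
    intro ω
    rw [abs_mul, abs_mul, abs_mul]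
    have h0j := (abs_nonneg (g j ω)).trans (hb j ω)
    have h0k := (abs_nonneg (g k ω)).trans (hb k ω)
    gcongr
    · exact hb j ω
    · exact hb k ω
  have hexp : ∫ ω, (∑ j, a j * g j ω) ^ 2 ∂μ
      = ∑ j, ∑ k, (a j * a k) * ∫ ω, g j ω * g k ω ∂μ := by
    have : ∀ ω, (∑ j, a j * g j ω) ^ 2 = ∑ j, ∑ k, (a j * g j ω) * (a k * g k ω) := by
      intro ω; rw [sq, Finset.sum_mul_sum]
    simp_rw [this]
    rw [integral_finset_sum _ (fun j _ => integrable_finset_sum _ (fun k _ => hint j k))]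
    refine Finset.sum_congr rfl fun j _ => ?_
    rw [integral_finset_sum _ (fun k _ => hint j k)]
    refine Finset.sum_congr rfl fun k _ => ?_
    have : ∀ ω, (a j * g j ω) * (a k * g k ω) = (a j * a k) * (g j ω * g k ω) := by
      intro ω; ring
    simp_rw [this]
    rw [integral_const_mul]
  rw [hexp]
  refine Finset.sum_le_sum fun j _ => ?_
  have : a j ^ 2 * ∫ ω, g j ω ^ 2 ∂μ
      = ∑ k, if k = j then (a j * a k) * ∫ ω, g j ω * g k ω ∂μ else 0 := by
    rw [Finset.sum_ite_eq' Finset.univ j]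
    simp only [Finset.mem_univ, if_true, sq]
  rw [this]
  refine Finset.sum_le_sum fun k _ => ?_
  by_cases h : k = j
  · simp [h]
  · simp only [h, if_false]
    have := hneg j k (fun e => h e.symm)
    have haa : 0 ≤ a j * a k := mul_nonneg (ha j) (ha k)
    exact mul_nonpos_of_nonneg_of_nonpos haa this

lemma intSumSq {N : ℕ} (g : Fin N → Ω → ℝ) (hm : ∀ j, Measurable (g j))
    (C : Fin N → ℝ) (hb : ∀ j ω, |g j ω| ≤ C j) (a : Fin N → ℝ) :
    Integrable (fun ω => (∑ j, a j * g j ω) ^ 2) μ := by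
  refine myInt μ (by measurability) ((∑ j, |a j| * C j) ^ 2) fun ω => ?_
  have h1 : |∑ j, a j * g j ω| ≤ ∑ j, |a j| * C j := by
    refine (Finset.abs_sum_le_sum_abs _ _).trans (Finset.sum_le_sum fun j _ => ?_)
    rw [abs_mul]
    exact mul_le_mul_of_nonneg_left (hb j ω) (abs_nonneg _)
  calc |(∑ j, a j * g j ω) ^ 2| = |∑ j, a j * g j ω| ^ 2 := by rw [abs_pow]
    _ ≤ (∑ j, |a j| * C j) ^ 2 := by
        exact pow_le_pow_left₀ (abs_nonneg _) h1 2

lemma sumSq {N : ℕ} (g : Fin N → Ω → ℝ) (hm : ∀ j, Measurable (g j))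
    (C : Fin N → ℝ) (hb : ∀ j ω, |g j ω| ≤ C j)
    (hneg : ∀ j k, j ≠ k → ∫ ω, g j ω * g k ω ∂μ ≤ 0)
    (a : Fin N → ℝ) :
    ∫ ω, (∑ j, a j * g j ω) ^ 2 ∂μ ≤ 2 * ∑ j, a j ^ 2 * ∫ ω, g j ω ^ 2 ∂μ := by
  set ap : Fin N → ℝ := fun j => max (a j) 0 with hap
  set an : Fin N → ℝ := fun j => max (-(a j)) 0 with han
  have hapn : ∀ j, a j = ap j - an j := by
    intro j
    rcases le_total (a j) 0 with h | h
    · rw [hap, han]; simp only; rw [max_eq_right h, max_eq_left (neg_nonneg.2 h)]; ring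
    · rw [hap, han]; simp only; rw [max_eq_left h, max_eq_right (neg_nonpos.2 h)]; ring
  have key : ∀ ω, (∑ j, a j * g j ω) ^ 2
      ≤ 2 * (∑ j, ap j * g j ω) ^ 2 + 2 * (∑ j, an j * g j ω) ^ 2 := by
    intro ω
    have : ∑ j, a j * g j ω = (∑ j, ap j * g j ω) - (∑ j, an j * g j ω) := by
      rw [← Finset.sum_sub_distrib]
      exact Finset.sum_congr rfl fun j _ => by rw [hapn j]; ring
    rw [this]; nlinarith [sq_nonneg ((∑ j, ap j * g j ω) + (∑ j, an j * g j ω))]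
  have hmono : ∫ ω, (∑ j, a j * g j ω) ^ 2 ∂μ
      ≤ ∫ ω, (2 * (∑ j, ap j * g j ω) ^ 2 + 2 * (∑ j, an j * g j ω) ^ 2) ∂μ := by
    refine integral_mono (intSumSq μ g hm C hb a) ?_ key
    exact (((intSumSq μ g hm C hb ap).const_mul 2).add ((intSumSq μ g hm C hb an).const_mul 2))
  have hsplit : ∫ ω, (2 * (∑ j, ap j * g j ω) ^ 2 + 2 * (∑ j, an j * g j ω) ^ 2) ∂μ
      = 2 * ∫ ω, (∑ j, ap j * g j ω) ^ 2 ∂μ + 2 * ∫ ω, (∑ j, an j * g j ω) ^ 2 ∂μ := by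
    rw [integral_add (((intSumSq μ g hm C hb ap).const_mul 2))
      (((intSumSq μ g hm C hb an).const_mul 2)), integral_const_mul, integral_const_mul]
  have h1 := sumSqNonneg μ g hm C hb hneg ap (fun j => le_max_right _ _)
  have h2 := sumSqNonneg μ g hm C hb hneg an (fun j => le_max_right _ _)
  have hsum : ∑ j, ap j ^ 2 * ∫ ω, g j ω ^ 2 ∂μ + ∑ j, an j ^ 2 * ∫ ω, g j ω ^ 2 ∂μ
      = ∑ j, a j ^ 2 * ∫ ω, g j ω ^ 2 ∂μ := by
    rw [← Finset.sum_add_distrib]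
    refine Finset.sum_congr rfl fun j _ => ?_
    have : ap j ^ 2 + an j ^ 2 = a j ^ 2 := by
      rcases le_total (a j) 0 with h | h
      · rw [hap, han]; simp only; rw [max_eq_right h, max_eq_left (neg_nonneg.2 h)]; ring
      · rw [hap, han]; simp only; rw [max_eq_left h, max_eq_right (neg_nonpos.2 h)]; ring
    rw [← this]; ring
  calc ∫ ω, (∑ j, a j * g j ω) ^ 2 ∂μ
      ≤ 2 * ∫ ω, (∑ j, ap j * g j ω) ^ 2 ∂μ + 2 * ∫ ω, (∑ j, an j * g j ω) ^ 2 ∂μ := by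
        rw [← hsplit]; exact hmono
    _ ≤ 2 * ∑ j, ap j ^ 2 * ∫ ω, g j ω ^ 2 ∂μ + 2 * ∑ j, an j ^ 2 * ∫ ω, g j ω ^ 2 ∂μ := by
        linarith
    _ = 2 * ∑ j, a j ^ 2 * ∫ ω, g j ω ^ 2 ∂μ := by rw [← hsum]; ring

end Aux

theorem pivotal_triple_norm_near_optimal {N m : ℕ} {Ω : Type*} [MeasurableSpace Ω]
    (μ : Measure Ω) [IsProbabilityMeasure μ]
    (v : Fin N → ℂ)
    (hsort : ∀ j k : Fin N, j ≤ k → ‖v k‖ ≤ ‖v j‖)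
    (Φ : Ω → Fin N → ℂ)
    (hmeas : ∀ i, AEMeasurable (fun ω => Φ ω i) μ)
    (p : Fin N → ℝ)
    (hp : ∀ i, 0 < p i ∧ p i ≤ 1)
    (hform : ∀ᵐ ω ∂μ, ∀ i, Φ ω i = v i / (p i : ℂ) ∨ Φ ω i = 0)
    (hprob : ∀ i, μ {ω | Φ ω i ≠ 0} = ENNReal.ofReal (p i))
    (hneg : ∀ i j, i ≠ j →
      μ ({ω | Φ ω i ≠ 0} ∩ {ω | Φ ω j ≠ 0}) ≤ ENNReal.ofReal (p i * p j))
    (hunbiased : ∀ i, ∫ ω, Φ ω i ∂μ = v i)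
    (hL2 : ∀ i < m, (∫ ω, ∑ j, ‖Φ ω j - v j‖ ^ 2 ∂μ)
      ≤ 1 / ((m : ℝ) - i) * (tailAbs v i) ^ 2) :
    ∀ f : Fin N → ℂ, (∀ i, ‖f i‖ ≤ 1) →
      ∀ i < m,
        (∫ ω, ‖∑ j, (starRingEnd ℂ) (f j) * (Φ ω j - v j)‖ ^ 2 ∂μ)
          ≤ 2 * (1 / ((m : ℝ) - i) * (tailAbs v i) ^ 2) := by
  intro f hf i hi
  have hpi : ∀ j, 0 < p j := fun j => (hp j).1
  -- measurable versions of the coordinates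
  set ψ : Fin N → Ω → ℂ := fun j => (hmeas j).mk _ with hψdef
  have hψm : ∀ j, Measurable (ψ j) := fun j => (hmeas j).measurable_mk
  have hψe : ∀ j, (fun ω => Φ ω j) =ᵐ[μ] ψ j := fun j => (hmeas j).ae_eq_mk
  have hall : ∀ᵐ ω ∂μ, ∀ j, Φ ω j = ψ j ω := (ae_all_iff).2 hψe
  have hAset : ∀ j, {ω | ψ j ω ≠ 0} =ᵐ[μ] {ω | Φ ω j ≠ 0} := by
    intro j
    rw [Filter.eventuallyEq_set]
    filter_upwards [hψe j] with ω h
    simp only [Set.mem_setOf_eq, h]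
  have hμA : ∀ j, μ {ω | ψ j ω ≠ 0} = ENNReal.ofReal (p j) :=
    fun j => (measure_congr (hAset j)).trans (hprob j)
  have hμAB : ∀ j k, j ≠ k →
      μ ({ω | ψ j ω ≠ 0} ∩ {ω | ψ k ω ≠ 0}) ≤ ENNReal.ofReal (p j * p k) := by
    intro j k hjk
    have hset : ({ω | ψ j ω ≠ 0} ∩ {ω | ψ k ω ≠ 0} : Set Ω)
        =ᵐ[μ] (({ω | Φ ω j ≠ 0} ∩ {ω | Φ ω k ≠ 0} : Set Ω)) := by
      rw [Filter.eventuallyEq_set]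
      filter_upwards [hψe j, hψe k] with ω h1 h2
      simp only [Set.mem_inter_iff, Set.mem_setOf_eq, h1, h2]
    rw [measure_congr hset]
    exact hneg j k hjk
  -- measurable set facts
  have hAm : ∀ j, MeasurableSet {ω | ψ j ω ≠ 0} :=
    fun j => ((hψm j) (measurableSet_singleton 0)).compl
  -- indicator and deviation functions
  set χ : Fin N → Ω → ℝ := fun j ω => if ψ j ω = 0 then 0 else 1 with hχdef
  set g : Fin N → Ω → ℝ := fun j ω => (if ψ j ω = 0 then 0 else 1 / p j) - 1 with hgdef
  have hχm : ∀ j, Measurable (χ j) := by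
    intro j
    exact Measurable.ite ((hψm j) (measurableSet_singleton 0)) measurable_const measurable_const
  have hgm : ∀ j, Measurable (g j) := by
    intro j
    exact (Measurable.ite ((hψm j) (measurableSet_singleton 0)) measurable_const
      measurable_const).sub measurable_const
  have hχb : ∀ j ω, |χ j ω| ≤ 1 := by
    intro j ω
    by_cases h : ψ j ω = 0 <;> simp [hχdef, h]
  have hgb : ∀ j ω, |g j ω| ≤ 1 / p j + 1 := by
    intro j ω
    have hpj := hpi j
    have h0 : 0 ≤ 1 / p j := by positivity
    by_cases h : ψ j ω = 0
    · simp only [hgdef, h, if_true]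
      rw [zero_sub, abs_neg, abs_one]
      linarith
    · simp only [hgdef, h, if_false]
      rw [abs_le]
      constructor <;> linarith
  have hgχ : ∀ j ω, g j ω = (1 / p j) * χ j ω - 1 := by
    intro j ω
    by_cases h : ψ j ω = 0 <;> simp [hgdef, hχdef, h]
  -- first moments of indicators
  have hχint : ∀ j, ∫ ω, χ j ω ∂μ = p j := by
    intro j
    have heq : χ j = Set.indicator {ω | ψ j ω ≠ 0} (fun _ => (1 : ℝ)) := by
      funext ω
      by_cases h : ψ j ω = 0 <;> simp [hχdef, Set.indicator_apply, h]
    rw [heq, integral_indicator_const (1 : ℝ) (hAm j), measureReal_def, hμA j, smul_eq_mul, mul_one,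
      ENNReal.toReal_ofReal (le_of_lt (hpi j))]
  -- second moments of pairs
  have hχχ : ∀ j k, j ≠ k → ∫ ω, χ j ω * χ k ω ∂μ ≤ p j * p k := by
    intro j k hjk
    have heq : (fun ω => χ j ω * χ k ω)
        = Set.indicator ({ω | ψ j ω ≠ 0} ∩ {ω | ψ k ω ≠ 0}) (fun _ => (1 : ℝ)) := by
      funext ω
      by_cases h1 : ψ j ω = 0 <;> by_cases h2 : ψ k ω = 0 <;>
        simp [hχdef, Set.indicator_apply, h1, h2]
    rw [heq, integral_indicator_const (1 : ℝ) ((hAm j).inter (hAm k)), measureReal_def, smul_eq_mul, mul_one]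
    refine ENNReal.toReal_le_of_le_ofReal (mul_nonneg (le_of_lt (hpi j)) (le_of_lt (hpi k))) ?_
    exact hμAB j k hjk
  have hχI : ∀ j, Integrable (χ j) μ := fun j => myInt μ (hχm j) 1 (hχb j)
  have hχχI : ∀ j k, Integrable (fun ω => χ j ω * χ k ω) μ := by
    intro j k
    refine myInt μ ((hχm j).mul (hχm k)) 1 fun ω => ?_
    rw [abs_mul]
    calc |χ j ω| * |χ k ω| ≤ 1 * 1 :=
          mul_le_mul (hχb j ω) (hχb k ω) (abs_nonneg _) zero_le_one
      _ = 1 := one_mul 1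
  -- negative correlation of the g's
  have hgg : ∀ j k, j ≠ k → ∫ ω, g j ω * g k ω ∂μ ≤ 0 := by
    intro j k hjk
    have heq : (fun ω => g j ω * g k ω) = fun ω =>
        (1 / (p j * p k)) * (χ j ω * χ k ω) - (1 / p j) * χ j ω - (1 / p k) * χ k ω + 1 := by
      funext ω
      rw [hgχ j ω, hgχ k ω]
      field_simp
      ring
    rw [heq]
    have I1 : Integrable (fun ω => (1 / (p j * p k)) * (χ j ω * χ k ω)) μ :=
      (hχχI j k).const_mul _
    have I2 : Integrable (fun ω => (1 / p j) * χ j ω) μ := (hχI j).const_mul _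
    have I3 : Integrable (fun ω => (1 / p k) * χ k ω) μ := (hχI k).const_mul _
    have I12 : Integrable (fun ω => (1 / (p j * p k)) * (χ j ω * χ k ω) - (1 / p j) * χ j ω) μ :=
      I1.sub I2
    have I123 : Integrable
        (fun ω => (1 / (p j * p k)) * (χ j ω * χ k ω) - (1 / p j) * χ j ω - (1 / p k) * χ k ω) μ :=
      I12.sub I3
    rw [integral_add I123 (integrable_const 1), integral_sub I12 I3,
      integral_sub I1 I2, integral_const_mul, integral_const_mul, integral_const_mul,
      integral_const, hχint j, hχint k]
    simp only [probReal_univ, measure_univ, ENNReal.toReal_one, smul_eq_mul, mul_one, one_mul]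
    have hT := hχχ j k hjk
    have hpj := hpi j
    have hpk := hpi k
    have h1 : (1 / p j) * p j = 1 := by field_simp
    have h2 : (1 / p k) * p k = 1 := by field_simp
    rw [h1, h2]
    have : (1 / (p j * p k)) * (∫ ω, χ j ω * χ k ω ∂μ) ≤ 1 := by
      rw [div_mul_eq_mul_div, one_mul, div_le_one (by positivity)]
      exact hT
    linarith
  -- a.e. form of the deviations
  have hform' : ∀ᵐ ω ∂μ, ∀ j, ψ j ω - v j = v j * ((g j ω : ℝ) : ℂ) := by
    filter_upwards [hform, hall] with ω h1 h2
    intro j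
    by_cases h : ψ j ω = 0
    · simp only [hgdef, h, if_true]
      push_cast
      ring
    · have he : Φ ω j = v j / (p j : ℂ) := by
        rcases h1 j with he | he
        · exact he
        · exact absurd ((h2 j).symm.trans he) h
      have hψv : ψ j ω = v j / (p j : ℂ) := (h2 j).symm.trans he
      have hpne : ((p j : ℂ)) ≠ 0 := by
        exact_mod_cast ne_of_gt (hpi j)
      simp only [hgdef, h, if_false]
      rw [hψv]
      push_cast
      field_simp
  -- real and imaginary coefficient sequences
  set c : Fin N → ℝ := fun j => ((starRingEnd ℂ) (f j) * v j).re with hcdef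
  set d : Fin N → ℝ := fun j => ((starRingEnd ℂ) (f j) * v j).im with hddef
  -- rewrite the target integral
  have heqI : ∫ ω, ‖∑ j, (starRingEnd ℂ) (f j) * (Φ ω j - v j)‖ ^ 2 ∂μ
      = ∫ ω, ((∑ j, c j * g j ω) ^ 2 + (∑ j, d j * g j ω) ^ 2) ∂μ := by
    refine integral_congr_ae ?_
    filter_upwards [hform', hall] with ω h1 h2
    have hz : ∑ j, (starRingEnd ℂ) (f j) * (Φ ω j - v j)
        = ∑ j, ((starRingEnd ℂ) (f j) * v j) * ((g j ω : ℝ) : ℂ) := by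
      refine Finset.sum_congr rfl fun j _ => ?_
      rw [h2 j, h1 j]
      ring
    have hre : (∑ j, ((starRingEnd ℂ) (f j) * v j) * ((g j ω : ℝ) : ℂ)).re
        = ∑ j, c j * g j ω := by
      rw [Complex.re_sum]
      refine Finset.sum_congr rfl fun j _ => ?_
      simp only [Complex.mul_re, Complex.ofReal_re, Complex.ofReal_im, mul_zero, sub_zero]
      rfl
    have him : (∑ j, ((starRingEnd ℂ) (f j) * v j) * ((g j ω : ℝ) : ℂ)).im
        = ∑ j, d j * g j ω := by
      rw [Complex.im_sum]
      refine Finset.sum_congr rfl fun j _ => ?_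
      simp only [Complex.mul_im, Complex.ofReal_re, Complex.ofReal_im, mul_zero, zero_add]
      rfl
    rw [hz, Complex.sq_norm, Complex.normSq_apply, hre, him]
    ring
  -- integrability and splitting
  set C : Fin N → ℝ := fun j => 1 / p j + 1 with hCdef
  have hIc := intSumSq μ g hgm C hgb c
  have hId := intSumSq μ g hgm C hgb d
  have hsplit : ∫ ω, ((∑ j, c j * g j ω) ^ 2 + (∑ j, d j * g j ω) ^ 2) ∂μ
      = (∫ ω, (∑ j, c j * g j ω) ^ 2 ∂μ) + ∫ ω, (∑ j, d j * g j ω) ^ 2 ∂μ :=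
    integral_add hIc hId
  -- apply the variance bound
  have hc := sumSq μ g hgm C hgb hgg c
  have hd := sumSq μ g hgm C hgb hgg d
  -- combine coefficients
  have hg2nn : ∀ j, 0 ≤ ∫ ω, g j ω ^ 2 ∂μ :=
    fun j => integral_nonneg fun ω => sq_nonneg _
  have hcd : ∀ j, c j ^ 2 + d j ^ 2 ≤ ‖v j‖ ^ 2 := by
    intro j
    have h1 : c j ^ 2 + d j ^ 2 = ‖(starRingEnd ℂ) (f j) * v j‖ ^ 2 := by
      rw [Complex.sq_norm, Complex.normSq_apply, hcdef, hddef]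
      ring
    rw [h1, norm_mul]
    have h2 : ‖(starRingEnd ℂ) (f j)‖ ≤ 1 := by
      rw [Complex.norm_conj]; exact hf j
    have h3 : ‖(starRingEnd ℂ) (f j)‖ * ‖v j‖ ≤ ‖v j‖ := by
      nlinarith [norm_nonneg (v j), norm_nonneg ((starRingEnd ℂ) (f j))]
    nlinarith [norm_nonneg (v j),
      mul_nonneg (norm_nonneg ((starRingEnd ℂ) (f j))) (norm_nonneg (v j))]
  have hsum2 : ∑ j, c j ^ 2 * ∫ ω, g j ω ^ 2 ∂μ + ∑ j, d j ^ 2 * ∫ ω, g j ω ^ 2 ∂μ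
      ≤ ∑ j, ‖v j‖ ^ 2 * ∫ ω, g j ω ^ 2 ∂μ := by
    rw [← Finset.sum_add_distrib]
    refine Finset.sum_le_sum fun j _ => ?_
    have := hcd j
    have := hg2nn j
    nlinarith
  -- identify with the L² error
  have hg2I : ∀ j, Integrable (fun ω => ‖v j‖ ^ 2 * g j ω ^ 2) μ := by
    intro j
    refine Integrable.const_mul (myInt μ ((hgm j).pow_const 2) ((1 / p j + 1) ^ 2) fun ω => ?_) _
    rw [abs_pow]
    exact pow_le_pow_left₀ (abs_nonneg _) (hgb j ω) 2
  have hfin : ∑ j, ‖v j‖ ^ 2 * ∫ ω, g j ω ^ 2 ∂μ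
      = ∫ ω, ∑ j, ‖Φ ω j - v j‖ ^ 2 ∂μ := by
    have h1 : ∑ j, ‖v j‖ ^ 2 * ∫ ω, g j ω ^ 2 ∂μ
        = ∫ ω, ∑ j, ‖v j‖ ^ 2 * g j ω ^ 2 ∂μ := by
      rw [integral_finset_sum _ (fun j _ => hg2I j)]
      exact Finset.sum_congr rfl fun j _ => (integral_const_mul _ _).symm
    rw [h1]
    refine integral_congr_ae ?_
    filter_upwards [hform', hall] with ω h2 h3
    refine Finset.sum_congr rfl fun j _ => ?_
    rw [h3 j, h2 j, norm_mul, Complex.norm_real, Real.norm_eq_abs, mul_pow, sq_abs]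
  -- final chain
  have hL := hL2 i hi
  calc ∫ ω, ‖∑ j, (starRingEnd ℂ) (f j) * (Φ ω j - v j)‖ ^ 2 ∂μ
      = (∫ ω, (∑ j, c j * g j ω) ^ 2 ∂μ) + ∫ ω, (∑ j, d j * g j ω) ^ 2 ∂μ := by
        rw [heqI, hsplit]
    _ ≤ 2 * ∑ j, c j ^ 2 * ∫ ω, g j ω ^ 2 ∂μ + 2 * ∑ j, d j ^ 2 * ∫ ω, g j ω ^ 2 ∂μ := by
        linarith
    _ = 2 * (∑ j, c j ^ 2 * ∫ ω, g j ω ^ 2 ∂μ + ∑ j, d j ^ 2 * ∫ ω, g j ω ^ 2 ∂μ) := by ring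
    _ ≤ 2 * ∑ j, ‖v j‖ ^ 2 * ∫ ω, g j ω ^ 2 ∂μ := by linarith
    _ = 2 * ∫ ω, ∑ j, ‖Φ ω j - v j‖ ^ 2 ∂μ := by rw [hfin]
    _ ≤ 2 * (1 / ((m : ℝ) - i) * (tailAbs v i) ^ 2) := by linarith
end
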